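/- Let K be a field of characteristic 2 and A a unital integral domain K-algebra with involution ♮, extended to M_2(A) by (a_{ij})^♮ = (a_{ji}^♮). Then the Lie algebra K_{M_2(A)} of skew-symmetric elements is not Lie nilpotent. -/
import Mathlib


open Matrix

/-- The skew-symmetric elements `{x | star x = -x}` as a `K`-submodule. -/
def skewSubmodule (K M : Type*) [Field K] [StarRing K] [TrivialStar K]
    [AddCommGroup M] [Module K M] [StarAddMonoid M] [StarModule K M] :
    Submodule K M where
  carrier := {x | star x = -x}
  add_mem' := by
    intro a b ha hb
    simp only [Set.mem_setOf_eq] at *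
    rw [star_add, ha, hb, neg_add]
  zero_mem' := by simp
  smul_mem' := by
    intro c x hx
    simp only [Set.mem_setOf_eq] at *
    rw [star_smul, hx, star_trivial, smul_neg]

/-- One step of the derived series: span of commutators. -/
def derivedStep (K A : Type*) [Field K] [Ring A] [Algebra K A] (L : Submodule K A) :
    Submodule K A :=
  Submodule.span K {z | ∃ x ∈ L, ∃ y ∈ L, z = x * y - y * x}

/-- Derived series of a subspace under the commutator bracket. -/
def lieDerSeries (K A : Type*) [Field K] [Ring A] [Algebra K A] (L : Submodule K A) :
    ℕ → Submodule K A
  | 0 => L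
  | n + 1 => derivedStep K A (lieDerSeries K A L n)

/-- Lower central series of a subspace under the commutator bracket. -/
def lowerCentral (K A : Type*) [Field K] [Ring A] [Algebra K A] (L : Submodule K A) :
    ℕ → Submodule K A
  | 0 => L
  | n + 1 => Submodule.span K
      {z | ∃ x ∈ lowerCentral K A L n, ∃ y ∈ L, z = x * y - y * x}

/-- Skew-symmetric matrices (w.r.t. plain transpose) as a submodule. -/
def skewT (K : Type*) [Field K] (n : ℕ) (A : Type*) [Ring A] [Algebra K A] :
    Submodule K (Matrix (Fin n) (Fin n) A) where
  carrier := {X | Xᵀ = -X}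
  add_mem' := by
    intro a b ha hb
    simp only [Set.mem_setOf_eq] at *
    rw [transpose_add, ha, hb, neg_add]
  zero_mem' := by simp
  smul_mem' := by
    intro c x hx
    simp only [Set.mem_setOf_eq] at *
    rw [transpose_smul, hx, smul_neg]

/-- In characteristic `2`, the Lie algebra of skew-symmetric elements of
`M₂(A)` over an integral domain `K`-algebra `A` with involution is not Lie nilpotent. -/
theorem skew_M2_not_nilpotent_char_two
    (K : Type*) [Field K] [StarRing K] [TrivialStar K] (hK : ringChar K = 2)
    (A : Type*) [Ring A] [IsDomain A] [Algebra K A] [StarRing A] [StarModule K A] :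
    ¬ ∃ m, lowerCentral K (Matrix (Fin 2) (Fin 2) A)
        (skewSubmodule K (Matrix (Fin 2) (Fin 2) A)) m = ⊥ := by
  haveI : CharP K 2 := ringChar.of_eq hK
  have h2A : (2 : A) = 0 := by
    have h2K : (2 : K) = 0 := by exact_mod_cast CharP.cast_eq_zero K 2
    calc (2 : A) = algebraMap K A 2 := (map_ofNat (algebraMap K A) 2).symm
    _ = 0 := by rw [h2K, map_zero]
  have hneg : ∀ x : A, -x = x := by
    intro x
    rw [neg_eq_iff_add_eq_zero, ← two_mul, h2A, zero_mul]
  set U : Matrix (Fin 2) (Fin 2) A := !![0,1;1,0] with hUdef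
  set D : Matrix (Fin 2) (Fin 2) A := !![1,0;0,0] with hDdef
  have hUL : U ∈ skewSubmodule K (Matrix (Fin 2) (Fin 2) A) := by
    show star U = -U
    ext i j
    fin_cases i <;> fin_cases j <;>
      simp [hUdef, Matrix.star_apply, hneg]
  have hDL : D ∈ skewSubmodule K (Matrix (Fin 2) (Fin 2) A) := by
    show star D = -D
    ext i j
    fin_cases i <;> fin_cases j <;>
      simp [hDdef, Matrix.star_apply, hneg]
  have hcomm : U = U * D - D * U := by
    ext i j
    fin_cases i <;> fin_cases j <;>
      simp [hUdef, hDdef, Matrix.mul_apply, Fin.sum_univ_two, hneg]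
  have hU : ∀ m, U ∈ lowerCentral K (Matrix (Fin 2) (Fin 2) A)
      (skewSubmodule K (Matrix (Fin 2) (Fin 2) A)) m := by
    intro m
    induction m with
    | zero => exact hUL
    | succ n ih =>
      exact Submodule.subset_span ⟨U, ih, D, hDL, hcomm⟩
  rintro ⟨m, hm⟩
  have := hU m
  rw [hm, Submodule.mem_bot] at this
  have h01 : U 0 1 = 0 := by rw [this]; rfl
  simp [hUdef] at h01
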